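/- Let α ≥ m ≥ 1 be integers and M = diag(M_0,...,M_{m-1}) a diagonal matrix with M_{m-1} ≠ 0. Define ℛ_j as in the Laguerre–Sobolev setting. Then deg ℛ_j = α + j - 1 if M_{j-1} ≠ 0 and deg ℛ_j = m - j if M_{j-1} = 0; consequently, with s = #{j : 1 ≤ j ≤ m, M_{j-1} ≠ 0}, the Casorati determinant Ω(x) = det(ℛ_i(x-j))_{i,j=1}^m has degree sα + (m-s)(m+1) - 2Σ_{j: M_{j-1}=0} j. -/

import Mathlib

open Polynomial Finset

/-- ℛ_j(x) = ((α-1)!/(m-j)!)(x+1)_{m-j}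
             + (j-1)!(x+1)_α ∑_{i=0}^{m-1}((-1)^i M_{j-1,i}/(α+i)!)(x-i+1)_i
(here j = j0+1 with j0 : Fin m). -/
noncomputable def calR (α m : ℕ) (M : Matrix (Fin m) (Fin m) ℝ) (j0 : Fin m) : Polynomial ℝ :=
  Polynomial.C ((Nat.factorial (α - 1) : ℝ) / (Nat.factorial (m - 1 - j0))) *
      (ascPochhammer ℝ (m - 1 - (j0 : ℕ))).comp (Polynomial.X + 1)
    + Polynomial.C ((Nat.factorial j0 : ℝ)) * ((ascPochhammer ℝ α).comp (Polynomial.X + 1)) *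
      ∑ i : Fin m, Polynomial.C ((-1) ^ (i : ℕ) * M j0 i / (Nat.factorial (α + i))) *
        (ascPochhammer ℝ (i : ℕ)).comp (Polynomial.X - Polynomial.C (i : ℝ) + 1)

lemma sum_range_card_le (s : Finset ℕ) (n : ℕ) (hn : s.card = n) :
    (∑ i ∈ Finset.range n, i ≤ ∑ x ∈ s, x) ∧
      (∑ x ∈ s, x ≤ ∑ i ∈ Finset.range n, i → s = Finset.range n) := by
  induction s using Finset.induction_on_max generalizing n with
  | empty => simp at hn; subst hn; simp
  | insert a s ha ih =>
    have has : a ∉ s := fun h => lt_irrefl a (ha a h)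
    have hsub : s ⊆ Finset.range a := fun x hx => Finset.mem_range.2 (ha x hx)
    have hcard : s.card ≤ a := by simpa using Finset.card_le_card hsub
    have hn' : n = s.card + 1 := by rw [← hn, Finset.card_insert_of_notMem has]
    subst hn'
    obtain ⟨ih1, ih2⟩ := ih s.card rfl
    rw [Finset.sum_insert has, Finset.sum_range_succ]
    constructor
    · omega
    · intro h
      have hs : s = Finset.range s.card := ih2 (by omega)
      have hae : a = s.card := by omega
      subst hae
      rw [Finset.range_add_one, ← hs]

lemma sum_fin_le_of_injective {m : ℕ} (f : Fin m → ℕ) (hf : Function.Injective f) :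
    ∑ i : Fin m, (i : ℕ) ≤ ∑ i, f i := by
  have himg : (Finset.univ.image f).card = m := by
    rw [Finset.card_image_of_injective _ hf, Finset.card_univ, Fintype.card_fin]
  have h := (sum_range_card_le (Finset.univ.image f) m himg).1
  rw [Fin.sum_univ_eq_sum_range (fun i => i)]
  calc ∑ i ∈ Finset.range m, i ≤ ∑ x ∈ Finset.univ.image f, x := h
    _ = ∑ i : Fin m, f i := Finset.sum_image fun x _ y _ h => hf h

lemma lt_of_injective_sum_le {m : ℕ} (f : Fin m → ℕ) (hf : Function.Injective f)
    (h : ∑ i, f i ≤ ∑ i : Fin m, (i : ℕ)) : ∀ i, f i < m := by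
  have himg : (Finset.univ.image f).card = m := by
    rw [Finset.card_image_of_injective _ hf, Finset.card_univ, Fintype.card_fin]
  have h2 := (sum_range_card_le (Finset.univ.image f) m himg).2
  have hsum : ∑ x ∈ Finset.univ.image f, x = ∑ i : Fin m, f i :=
    Finset.sum_image fun x _ y _ h => hf h
  have heq : Finset.univ.image f = Finset.range m := by
    apply h2
    rw [hsum, Fin.sum_univ_eq_sum_range (fun i => i)] at *
    omega
  intro i
  have : f i ∈ Finset.univ.image f := Finset.mem_image_of_mem f (Finset.mem_univ i)
  rw [heq, Finset.mem_range] at this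
  exact this

section MonoDet
variable {m : ℕ}

noncomputable def monoDet (c : Fin m → ℝ) (k : Fin m → ℕ) : Polynomial ℝ :=
  Matrix.det (Matrix.of fun i j => (X - C (c j)) ^ (k i))

lemma monoDet_eq (c : Fin m → ℝ) (k : Fin m → ℕ) :
    monoDet c k = ∑ r ∈ Fintype.piFinset (fun i => Finset.range (k i + 1)),
      C ((∏ i, ((k i).choose (r i) : ℝ)) *
          Matrix.det (Matrix.of fun i j : Fin m => (-c j) ^ (k i - r i)))
        * X ^ (∑ i, r i) := by
  classical
  have hrow : ∀ (i : Fin m) (j : Fin m), (X - C (c j)) ^ (k i) =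
      ∑ s ∈ Finset.range (k i + 1),
        (C (((k i).choose s : ℝ)) * X ^ s) * C ((-c j) ^ (k i - s)) := by
    intro i j
    rw [sub_eq_add_neg, ← C_neg, add_pow]
    refine Finset.sum_congr rfl fun s _ => ?_
    simp only [← C_pow, Polynomial.C_eq_natCast]
    push_cast
    ring
  have hA : (Matrix.of fun i j => (X - C (c j)) ^ (k i)) =
      fun i => ∑ s ∈ Finset.range (k i + 1),
        (fun j => (C (((k i).choose s : ℝ)) * X ^ s) * C ((-c j) ^ (k i - s))) := by
    funext i j
    simp only [Matrix.of_apply, Finset.sum_apply]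
    exact hrow i j
  have hdet := (Matrix.detRowAlternating :
        (Fin m → ℝ[X]) [⋀^Fin m]→ₗ[ℝ[X]] ℝ[X]).toMultilinearMap.map_sum_finset
      (fun i s => fun j => (C (((k i).choose s : ℝ)) * X ^ s) * C ((-c j) ^ (k i - s)))
      (fun i => Finset.range (k i + 1))
  simp only [AlternatingMap.coe_multilinearMap] at hdet
  rw [monoDet]
  show Matrix.detRowAlternating _ = _
  rw [hA, hdet]
  refine Finset.sum_congr rfl fun r hr => ?_
  have h1 : (Matrix.detRowAlternating
        (fun i => fun j => (C (((k i).choose (r i) : ℝ)) * X ^ (r i)) * C ((-c j) ^ (k i - r i))) : ℝ[X])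
      = Matrix.det (Matrix.of fun i j =>
          (C (((k i).choose (r i) : ℝ)) * X ^ (r i)) * C ((-c j) ^ (k i - r i))) := rfl
  rw [h1]
  rw [show (Matrix.of fun i j =>
      (C (((k i).choose (r i) : ℝ)) * X ^ (r i)) * C ((-c j) ^ (k i - r i)))
    = (Matrix.of fun i j => (fun i => C (((k i).choose (r i) : ℝ)) * X ^ (r i)) i *
        (Matrix.of fun i j : Fin m => C ((-c j) ^ (k i - r i))) i j) from rfl]
  rw [Matrix.det_mul_column]
  have h2 : Matrix.det (Matrix.of fun i j : Fin m => C ((-c j) ^ (k i - r i)))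
      = C (Matrix.det (Matrix.of fun i j : Fin m => (-c j) ^ (k i - r i))) := by
    rw [RingHom.map_det]
    rfl
  rw [h2, Finset.prod_mul_distrib, ← map_prod, prod_pow_eq_pow_sum]
  rw [mul_right_comm, ← C_mul]

lemma monoDet_coeff (c : Fin m → ℝ) (k : Fin m → ℕ) (t : ℕ) :
    (monoDet c k).coeff t = ∑ r ∈ Fintype.piFinset (fun i => Finset.range (k i + 1)),
      (if ∑ i, r i = t then (∏ i, ((k i).choose (r i) : ℝ)) *
          Matrix.det (Matrix.of fun i j : Fin m => (-c j) ^ (k i - r i)) else 0) := by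
  rw [monoDet_eq, finset_sum_coeff]
  refine Finset.sum_congr rfl fun r _ => ?_
  rw [coeff_C_mul, coeff_X_pow]
  by_cases h : ∑ i, r i = t
  · simp [h]
  · simp [h, Ne.symm h]

lemma monoDet_coeff_eq_zero (c : Fin m → ℝ) (k : Fin m → ℕ) (t : ℕ)
    (h : ∑ i, k i < t + ∑ i : Fin m, (i : ℕ)) : (monoDet c k).coeff t = 0 := by
  rw [monoDet_coeff]
  refine Finset.sum_eq_zero fun r hr => ?_
  rw [Fintype.mem_piFinset] at hr
  have hrk : ∀ i, r i ≤ k i := fun i => Nat.lt_succ_iff.mp (Finset.mem_range.mp (hr i))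
  split_ifs with hs
  · have hsum : ∑ i, (k i - r i) + ∑ i, r i = ∑ i, k i := by
      rw [← Finset.sum_add_distrib]
      exact Finset.sum_congr rfl fun i _ => by have := hrk i; omega
    have hni : ¬ Function.Injective (fun i => k i - r i) := by
      intro hinj
      have h1 := sum_fin_le_of_injective _ hinj
      omega
    rw [Function.not_injective_iff] at hni
    obtain ⟨a, b, hab, hne⟩ := hni
    have hz : Matrix.det (Matrix.of fun i j : Fin m => (-c j) ^ (k i - r i)) = 0 :=
      Matrix.det_zero_of_row_eq hne (funext fun j => by
        simp only [Matrix.of_apply]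
        rw [hab])
    simp [hz]
  · rfl

end MonoDet

section Top
variable {m : ℕ}

open Classical in
noncomputable def permOf (k r : Fin m → ℕ) : Equiv.Perm (Fin m) :=
  if h : (∀ i, k i - r i < m) ∧ Function.Injective (fun i : Fin m => k i - r i) then
    Equiv.ofBijective (fun i => (⟨k i - r i, h.1 i⟩ : Fin m))
      (Finite.injective_iff_bijective.mp fun a b hab => h.2 (congrArg Fin.val hab))
  else 1

lemma permOf_apply (k r : Fin m → ℕ) (h1 : ∀ i, k i - r i < m)
    (h2 : Function.Injective (fun i : Fin m => k i - r i)) (i : Fin m) :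
    ((permOf k r i : Fin m) : ℕ) = k i - r i := by
  rw [permOf, dif_pos ⟨h1, h2⟩]
  rfl

lemma det_choose_ne_zero (k : Fin m → ℕ) (hk : Function.Injective k) :
    Matrix.det (Matrix.of fun i j : Fin m => ((k i).choose (j : ℕ) : ℝ)) ≠ 0 := by
  have h1 : Matrix.det (Matrix.of fun i j : Fin m =>
        ((descPochhammer ℝ (j : ℕ)).eval ((k i : ℝ)))) =
      (Matrix.vandermonde fun i => (k i : ℝ)).det :=
    (Matrix.det_eval_matrixOfPolynomials_eq_det_vandermonde _ _
      (fun i => descPochhammer_natDegree ℝ i) (fun i => monic_descPochhammer ℝ i)).symm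
  have h2 : (Matrix.of fun i j : Fin m => ((descPochhammer ℝ (j : ℕ)).eval ((k i : ℝ)))) =
      Matrix.of fun i j : Fin m =>
        (((j : ℕ).factorial : ℝ)) * (((k i).choose (j : ℕ) : ℝ)) := by
    ext i j
    simp only [Matrix.of_apply]
    rw [descPochhammer_eval_eq_descFactorial, Nat.descFactorial_eq_factorial_mul_choose]
    push_cast
    ring
  have h3 := Matrix.det_mul_row (fun j : Fin m => (((j : ℕ).factorial : ℝ)))
    (Matrix.of fun i j : Fin m => ((k i).choose (j : ℕ) : ℝ))
  have h4 : (Matrix.vandermonde fun i => (k i : ℝ)).det ≠ 0 := by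
    rw [Matrix.det_vandermonde]
    refine Finset.prod_ne_zero_iff.mpr fun i _ => Finset.prod_ne_zero_iff.mpr fun j hj => ?_
    have hij : i ≠ j := (Finset.mem_Ioi.mp hj).ne
    intro hzero
    have : (k j : ℝ) = (k i : ℝ) := by linarith [sub_eq_zero.mp hzero]
    exact hij (hk (Nat.cast_injective this)).symm
  rw [← h1, h2] at h4
  have h6 : (Matrix.of fun i j : Fin m =>
        (((j : ℕ).factorial : ℝ)) * (((k i).choose (j : ℕ)) : ℝ)).det
      = (∏ i : Fin m, (((i : ℕ).factorial : ℝ))) *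
        (Matrix.of fun i j : Fin m => ((k i).choose (j : ℕ) : ℝ)).det := h3
  rw [h6] at h4
  exact right_ne_zero_of_mul h4

lemma monoDet_top_aux (c : Fin m → ℝ) (k : Fin m → ℕ) (t : ℕ)
    (ht : t + ∑ i : Fin m, (i : ℕ) = ∑ i, k i) (r : Fin m → ℕ) (hrk : ∀ i, r i ≤ k i)
    (hne : (if ∑ i, r i = t then (∏ i, ((k i).choose (r i) : ℝ)) *
        Matrix.det (Matrix.of fun i j : Fin m => (-c j) ^ (k i - r i)) else 0) ≠ 0) :
    (∑ i, r i = t) ∧ (∑ i, (k i - r i) = ∑ i : Fin m, (i : ℕ)) ∧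
      (∀ i, k i - r i < m) ∧ Function.Injective (fun i : Fin m => k i - r i) := by
  have hst : ∑ i, r i = t := by
    by_contra h
    rw [if_neg h] at hne
    exact hne rfl
  rw [if_pos hst] at hne
  have hdet : Matrix.det (Matrix.of fun i j : Fin m => (-c j) ^ (k i - r i)) ≠ 0 :=
    (mul_ne_zero_iff.mp hne).2
  have hinj : Function.Injective (fun i : Fin m => k i - r i) := by
    by_contra hni
    rw [Function.not_injective_iff] at hni
    obtain ⟨a, b, hab, hneq⟩ := hni
    exact hdet (Matrix.det_zero_of_row_eq hneq (funext fun j => by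
      simp only [Matrix.of_apply]
      rw [hab]))
  have hsum : ∑ i, (k i - r i) + ∑ i, r i = ∑ i, k i := by
    rw [← Finset.sum_add_distrib]
    exact Finset.sum_congr rfl fun i _ => by have := hrk i; omega
  have hSig : ∑ i, (k i - r i) = ∑ i : Fin m, (i : ℕ) := by omega
  exact ⟨hst, hSig, lt_of_injective_sum_le _ hinj (le_of_eq hSig), hinj⟩

set_option maxHeartbeats 1000000 in
lemma monoDet_coeff_top (c : Fin m → ℝ) (hc : Function.Injective c) (k : Fin m → ℕ)
    (hk : Function.Injective k) (t : ℕ) (ht : t + ∑ i : Fin m, (i : ℕ) = ∑ i, k i) :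
    (monoDet c k).coeff t ≠ 0 := by
  classical
  set V : Matrix (Fin m) (Fin m) ℝ := Matrix.of fun (l : Fin m) (j : Fin m) => (-c j) ^ (l : ℕ)
    with hVdef
  have hV : V.det ≠ 0 := by
    have hVt : V = (Matrix.vandermonde fun j => -c j).transpose := by
      ext i j
      simp [hVdef, Matrix.vandermonde]
    rw [hVt, Matrix.det_transpose, Matrix.det_vandermonde]
    refine Finset.prod_ne_zero_iff.mpr fun i _ => Finset.prod_ne_zero_iff.mpr fun j hj => ?_
    have hij : i ≠ j := (Finset.mem_Ioi.mp hj).ne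
    intro hzero
    have : c j = c i := by linarith [sub_eq_zero.mp hzero]
    exact hij (hc this).symm
  -- the sign of a permutation as a real number is nonzero
  have hsign : ∀ σ : Equiv.Perm (Fin m), (((Equiv.Perm.sign σ : ℤ) : ℝ)) ≠ 0 := by
    intro σ
    rcases Int.units_eq_one_or (Equiv.Perm.sign σ) with h | h <;> rw [h] <;> norm_num
  have key : (monoDet c k).coeff t =
      ∑ σ : Equiv.Perm (Fin m),
        ((Equiv.Perm.sign σ : ℤ) : ℝ) * (∏ i, ((k i).choose ((σ i : Fin m) : ℕ) : ℝ)) * V.det := by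
    rw [monoDet_coeff]
    refine Finset.sum_bij_ne_zero (fun r _ _ => permOf k r) (fun r h₁ h₂ => Finset.mem_univ _)
      ?_ ?_ ?_
    -- helper facts will be re-derived in each branch
    case _ => -- injectivity
      intro r₁ hm₁ hne₁ r₂ hm₂ hne₂ heq
      rw [Fintype.mem_piFinset] at hm₁ hm₂
      have hk₁ : ∀ i, r₁ i ≤ k i := fun i => Nat.lt_succ_iff.mp (Finset.mem_range.mp (hm₁ i))
      have hk₂ : ∀ i, r₂ i ≤ k i := fun i => Nat.lt_succ_iff.mp (Finset.mem_range.mp (hm₂ i))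
      have hP₁ := monoDet_top_aux c k t ht r₁ hk₁ hne₁
      have hP₂ := monoDet_top_aux c k t ht r₂ hk₂ hne₂
      have heq' : permOf k r₁ = permOf k r₂ := heq
      funext i
      have e₁ := permOf_apply k r₁ hP₁.2.2.1 hP₁.2.2.2 i
      have e₂ := permOf_apply k r₂ hP₂.2.2.1 hP₂.2.2.2 i
      rw [heq'] at e₁
      have := hk₁ i
      have := hk₂ i
      omega
    case _ => -- surjectivity
      intro σ _ hgne
      have hchoose : ∀ i, ((σ i : Fin m) : ℕ) ≤ k i := by
        intro i
        by_contra hlt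
        push_neg at hlt
        have : ((k i).choose ((σ i : Fin m) : ℕ) : ℝ) = 0 := by
          rw [Nat.choose_eq_zero_of_lt hlt]; norm_num
        exact hgne (by rw [Finset.prod_eq_zero (Finset.mem_univ i) this]; ring)
      refine ⟨fun i => k i - ((σ i : Fin m) : ℕ), ?_, ?_, ?_⟩
      · rw [Fintype.mem_piFinset]
        intro i
        rw [Finset.mem_range]
        omega
      · -- nonzero
        have hsub : ∀ i, k i - (k i - ((σ i : Fin m) : ℕ)) = ((σ i : Fin m) : ℕ) := by
          intro i; have := hchoose i; omega
        have hsumσ : ∑ i, ((σ i : Fin m) : ℕ) = ∑ i : Fin m, (i : ℕ) :=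
          Equiv.sum_comp σ (fun j : Fin m => (j : ℕ))
        have hst : ∑ i, (k i - ((σ i : Fin m) : ℕ)) = t := by
          have : ∑ i, (k i - ((σ i : Fin m) : ℕ)) + ∑ i, ((σ i : Fin m) : ℕ) = ∑ i, k i := by
            rw [← Finset.sum_add_distrib]
            exact Finset.sum_congr rfl fun i _ => by have := hchoose i; omega
          omega
        rw [if_pos hst]
        have hW : (Matrix.of fun i j : Fin m => (-c j) ^ (k i - (k i - ((σ i : Fin m) : ℕ))))
            = V.submatrix σ id := by
          ext i j
          simp only [Matrix.of_apply, Matrix.submatrix_apply, hVdef, id]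
          rw [hsub i]
        rw [hW, Matrix.det_permute]
        refine mul_ne_zero (Finset.prod_ne_zero_iff.mpr fun i _ => ?_) (mul_ne_zero (hsign σ) hV)
        have hpos : 0 < (k i).choose (k i - ((σ i : Fin m) : ℕ)) := by
          rw [Nat.choose_symm (hchoose i)]
          exact Nat.choose_pos (hchoose i)
        show ((k i).choose (k i - ((σ i : Fin m) : ℕ)) : ℝ) ≠ 0
        exact_mod_cast hpos.ne'
      · -- permOf gives back σ
        have hsub : ∀ i, k i - (k i - ((σ i : Fin m) : ℕ)) = ((σ i : Fin m) : ℕ) := by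
          intro i; have := hchoose i; omega
        have hlt : ∀ i, k i - (k i - ((σ i : Fin m) : ℕ)) < m := fun i => by
          rw [hsub i]; exact (σ i).isLt
        have hinj : Function.Injective (fun i : Fin m => k i - (k i - ((σ i : Fin m) : ℕ))) := by
          intro a b hab
          simp only [hsub] at hab
          exact σ.injective (Fin.val_injective hab)
        ext i
        rw [permOf_apply _ _ hlt hinj i, hsub i]
    case _ => -- values agree
      intro r hmem hne
      rw [Fintype.mem_piFinset] at hmem
      have hrk : ∀ i, r i ≤ k i := fun i => Nat.lt_succ_iff.mp (Finset.mem_range.mp (hmem i))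
      have hP := monoDet_top_aux c k t ht r hrk hne
      obtain ⟨hst, hSig, hlt, hinj⟩ := hP
      have happ := permOf_apply k r hlt hinj
      rw [if_pos hst]
      have hW : (Matrix.of fun i j : Fin m => (-c j) ^ (k i - r i))
          = V.submatrix (permOf k r) id := by
        ext i j
        simp only [Matrix.of_apply, Matrix.submatrix_apply, hVdef, id]
        rw [happ i]
      have hch : ∀ i, ((k i).choose (r i) : ℝ) = ((k i).choose ((permOf k r i : Fin m) : ℕ) : ℝ) := by
        intro i
        rw [happ i, Nat.choose_symm (hrk i)]
      rw [hW, Matrix.det_permute, Finset.prod_congr rfl (fun i _ => hch i)]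
      ring
  rw [key, ← Finset.sum_mul]
  refine mul_ne_zero ?_ hV
  have : ∑ σ : Equiv.Perm (Fin m),
      ((Equiv.Perm.sign σ : ℤ) : ℝ) * (∏ i, ((k i).choose ((σ i : Fin m) : ℕ) : ℝ))
      = Matrix.det (Matrix.of fun a b : Fin m => ((k b).choose ((a : Fin m) : ℕ) : ℝ)) := by
    rw [Matrix.det_apply']
    rfl
  rw [this, ← Matrix.det_transpose]
  have htr : (Matrix.of fun a b : Fin m => ((k b).choose ((a : Fin m) : ℕ) : ℝ)).transpose
      = Matrix.of fun i j : Fin m => ((k i).choose (j : ℕ) : ℝ) := by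
    ext i j; rfl
  rw [htr]
  exact det_choose_ne_zero k hk

end Top

section MainDet
variable {m : ℕ}

lemma finset_sum_comp' {σ : Type*} (s : Finset σ) (f : σ → Polynomial ℝ) (q : Polynomial ℝ) :
    (∑ i ∈ s, f i).comp q = ∑ i ∈ s, (f i).comp q := by
  simp only [Polynomial.comp, Polynomial.eval₂_finset_sum]

set_option maxHeartbeats 1000000 in
lemma main_det (c : Fin m → ℝ) (hc : Function.Injective c)
    (p : Fin m → Polynomial ℝ) (D : Fin m → ℕ) (hD : Function.Injective D)
    (hdeg : ∀ i, (p i).degree = (D i : WithBot ℕ)) :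
    Matrix.det (Matrix.of fun i j : Fin m => (p i).comp (X - C (c j))) ≠ 0 ∧
    (Matrix.det (Matrix.of fun i j : Fin m => (p i).comp (X - C (c j)))).natDegree
      + (∑ i : Fin m, (i : ℕ)) = ∑ i, D i := by
  classical
  have hnd : ∀ i, (p i).natDegree = D i := fun i => natDegree_eq_of_degree_eq_some (hdeg i)
  have hpne : ∀ i, p i ≠ 0 := by
    intro i h
    have := hdeg i
    rw [h, degree_zero] at this
    exact WithBot.bot_ne_coe this
  have hp0 : ∀ i, (p i).coeff (D i) ≠ 0 := fun i => by
    rw [← hnd i, ← Polynomial.leadingCoeff]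
    exact leadingCoeff_ne_zero.mpr (hpne i)
  -- expansion of the matrix rows
  have hexp : (Matrix.of fun i j : Fin m => (p i).comp (X - C (c j))) =
      fun i => ∑ s ∈ Finset.range (D i + 1),
        (fun j => C ((p i).coeff s) * (X - C (c j)) ^ s) := by
    funext i j
    simp only [Matrix.of_apply, Finset.sum_apply]
    conv_lhs => rw [(p i).as_sum_range_C_mul_X_pow]
    rw [hnd i, finset_sum_comp']
    refine Finset.sum_congr rfl fun s _ => ?_
    rw [mul_comp, C_comp, pow_comp, X_comp]
  have hdet := (Matrix.detRowAlternating :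
        (Fin m → Polynomial ℝ) [⋀^Fin m]→ₗ[Polynomial ℝ] Polynomial ℝ).toMultilinearMap.map_sum_finset
      (fun i s => fun j => C ((p i).coeff s) * (X - C (c j)) ^ s)
      (fun i => Finset.range (D i + 1))
  simp only [AlternatingMap.coe_multilinearMap] at hdet
  have hQ : Matrix.det (Matrix.of fun i j : Fin m => (p i).comp (X - C (c j))) =
      ∑ t ∈ Fintype.piFinset (fun i => Finset.range (D i + 1)),
        (∏ i, C ((p i).coeff (t i))) * monoDet c t := by
    show Matrix.detRowAlternating _ = _
    rw [hexp, hdet]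
    refine Finset.sum_congr rfl fun t _ => ?_
    have h1 : (Matrix.detRowAlternating
          (fun i => fun j => C ((p i).coeff (t i)) * (X - C (c j)) ^ (t i)) : Polynomial ℝ)
        = Matrix.det (Matrix.of fun i j =>
            (fun i => C ((p i).coeff (t i))) i *
              (Matrix.of fun i j : Fin m => (X - C (c j)) ^ (t i)) i j) := rfl
    rw [h1, Matrix.det_mul_column]
    rfl
  set N : ℕ := ∑ i, D i - ∑ i : Fin m, (i : ℕ) with hNdef
  have hle : ∑ i : Fin m, (i : ℕ) ≤ ∑ i, D i := sum_fin_le_of_injective D hD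
  have hNt : N + ∑ i : Fin m, (i : ℕ) = ∑ i, D i := by omega
  have hcoeffzero : ∀ u, N < u →
      (Matrix.det (Matrix.of fun i j : Fin m => (p i).comp (X - C (c j)))).coeff u = 0 := by
    intro u hu
    rw [hQ, finset_sum_coeff]
    refine Finset.sum_eq_zero fun t ht => ?_
    rw [Fintype.mem_piFinset] at ht
    have htD : ∀ i, t i ≤ D i := fun i => Nat.lt_succ_iff.mp (Finset.mem_range.mp (ht i))
    have hsum : ∑ i, t i ≤ ∑ i, D i := Finset.sum_le_sum fun i _ => htD i
    rw [← map_prod, coeff_C_mul, monoDet_coeff_eq_zero c t u (by omega), mul_zero]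
  have hcoeffN :
      (Matrix.det (Matrix.of fun i j : Fin m => (p i).comp (X - C (c j)))).coeff N ≠ 0 := by
    rw [hQ, finset_sum_coeff, Finset.sum_eq_single D]
    · rw [← map_prod, coeff_C_mul]
      exact mul_ne_zero (Finset.prod_ne_zero_iff.mpr fun i _ => hp0 i)
        (monoDet_coeff_top c hc D hD N hNt)
    · intro t ht htne
      rw [Fintype.mem_piFinset] at ht
      have htD : ∀ i, t i ≤ D i := fun i => Nat.lt_succ_iff.mp (Finset.mem_range.mp (ht i))
      obtain ⟨i0, hi0⟩ := Function.ne_iff.mp htne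
      have hsum : ∑ i, t i < ∑ i, D i :=
        Finset.sum_lt_sum (fun i _ => htD i) ⟨i0, Finset.mem_univ i0, by
          have := htD i0; omega⟩
      rw [← map_prod, coeff_C_mul, monoDet_coeff_eq_zero c t N (by omega), mul_zero]
    · intro hD'
      exact absurd (Fintype.mem_piFinset.mpr fun i => Finset.mem_range.mpr (Nat.lt_succ_self _)) hD'
  refine ⟨fun h => hcoeffN (by rw [h, coeff_zero]), ?_⟩
  have hdeg' : (Matrix.det (Matrix.of fun i j : Fin m => (p i).comp (X - C (c j)))).natDegree = N :=
    le_antisymm (natDegree_le_iff_coeff_eq_zero.mpr hcoeffzero) (le_natDegree_of_ne_zero hcoeffN)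
  omega

end MainDet

lemma asc_comp_monic (n : ℕ) (a : ℝ) : ((ascPochhammer ℝ n).comp (X + C a)).Monic :=
  (monic_ascPochhammer ℝ n).comp_X_add_C a

lemma asc_comp_natDegree (n : ℕ) (a : ℝ) :
    ((ascPochhammer ℝ n).comp (X + C a)).natDegree = n := by
  rw [natDegree_comp, ascPochhammer_natDegree, natDegree_X_add_C, mul_one]

lemma asc_comp_one_monic (n : ℕ) : ((ascPochhammer ℝ n).comp (X + 1)).Monic := by
  have := asc_comp_monic n 1
  rwa [C_1] at this

lemma asc_comp_one_natDegree (n : ℕ) : ((ascPochhammer ℝ n).comp (X + 1)).natDegree = n := by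
  have := asc_comp_natDegree n 1
  rwa [C_1] at this

lemma calR_diagonal (α m : ℕ) (d : Fin m → ℝ) (j0 : Fin m) :
    calR α m (Matrix.diagonal d) j0 =
      C ((Nat.factorial (α - 1) : ℝ) / (Nat.factorial (m - 1 - j0))) *
        (ascPochhammer ℝ (m - 1 - (j0 : ℕ))).comp (X + 1)
      + C ((Nat.factorial j0 : ℝ) * ((-1) ^ (j0 : ℕ) * d j0 / (Nat.factorial (α + j0)))) *
          (((ascPochhammer ℝ α).comp (X + 1)) *
            ((ascPochhammer ℝ (j0 : ℕ)).comp (X - C ((j0 : ℝ)) + 1))) := by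
  rw [calR]
  congr 1
  rw [Finset.sum_eq_single j0]
  · rw [Matrix.diagonal_apply_eq, C_mul]
    ring
  · intro i _ hne
    rw [Matrix.diagonal_apply_ne' d hne]
    simp
  · intro h
    exact absurd (Finset.mem_univ j0) h

lemma calR_degree_zero (α m : ℕ) (d : Fin m → ℝ) (j0 : Fin m) (hd : d j0 = 0) :
    (calR α m (Matrix.diagonal d) j0).degree = ((m - 1 - (j0 : ℕ) : ℕ) : WithBot ℕ) := by
  rw [calR_diagonal, hd]
  have hfac1 : ((Nat.factorial (α - 1) : ℝ) / (Nat.factorial (m - 1 - j0))) ≠ 0 := by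
    apply div_ne_zero <;> exact_mod_cast (Nat.factorial_pos _).ne'
  rw [show ((Nat.factorial j0 : ℝ) * ((-1) ^ (j0 : ℕ) * 0 / (Nat.factorial (α + j0)))) = 0 by ring,
    map_zero, zero_mul, add_zero, degree_C_mul hfac1,
    degree_eq_natDegree (asc_comp_one_monic _).ne_zero, asc_comp_one_natDegree]

lemma calR_degree_ne_zero (α m : ℕ) (hα : m ≤ α) (d : Fin m → ℝ) (j0 : Fin m)
    (hd : d j0 ≠ 0) :
    (calR α m (Matrix.diagonal d) j0).degree = ((α + (j0 : ℕ) : ℕ) : WithBot ℕ) := by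
  rw [calR_diagonal]
  have hXC : (X - C ((j0 : ℝ)) + 1 : Polynomial ℝ) = X + C (1 - (j0 : ℝ)) := by
    rw [map_sub, C_1]
    ring
  rw [hXC]
  have hmul : (((ascPochhammer ℝ α).comp (X + 1)) *
      ((ascPochhammer ℝ (j0 : ℕ)).comp (X + C (1 - (j0 : ℝ))))).Monic :=
    (asc_comp_one_monic α).mul (asc_comp_monic _ _)
  have hmulnd : (((ascPochhammer ℝ α).comp (X + 1)) *
      ((ascPochhammer ℝ (j0 : ℕ)).comp (X + C (1 - (j0 : ℝ))))).natDegree = α + (j0 : ℕ) := by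
    rw [(asc_comp_one_monic α).natDegree_mul (asc_comp_monic _ _),
      asc_comp_one_natDegree, asc_comp_natDegree]
  have hcoef : ((Nat.factorial j0 : ℝ) * ((-1) ^ (j0 : ℕ) * d j0 / (Nat.factorial (α + j0)))) ≠ 0 := by
    apply mul_ne_zero
    · exact_mod_cast (Nat.factorial_pos _).ne'
    · apply div_ne_zero (mul_ne_zero (pow_ne_zero _ (by norm_num)) hd)
      exact_mod_cast (Nat.factorial_pos _).ne'
  have hd2 : (C ((Nat.factorial j0 : ℝ) * ((-1) ^ (j0 : ℕ) * d j0 / (Nat.factorial (α + j0)))) *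
      (((ascPochhammer ℝ α).comp (X + 1)) *
        ((ascPochhammer ℝ (j0 : ℕ)).comp (X + C (1 - (j0 : ℝ)))))).degree
      = ((α + (j0 : ℕ) : ℕ) : WithBot ℕ) := by
    rw [degree_C_mul hcoef, degree_eq_natDegree hmul.ne_zero, hmulnd]
  have hfac1 : ((Nat.factorial (α - 1) : ℝ) / (Nat.factorial (m - 1 - j0))) ≠ 0 := by
    apply div_ne_zero <;> exact_mod_cast (Nat.factorial_pos _).ne'
  have hd1 : (C ((Nat.factorial (α - 1) : ℝ) / (Nat.factorial (m - 1 - j0))) *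
      (ascPochhammer ℝ (m - 1 - (j0 : ℕ))).comp (X + 1)).degree
      = ((m - 1 - (j0 : ℕ) : ℕ) : WithBot ℕ) := by
    rw [degree_C_mul hfac1,
      degree_eq_natDegree (asc_comp_one_monic _).ne_zero, asc_comp_one_natDegree]
  have hlt : ((m - 1 - (j0 : ℕ) : ℕ) : WithBot ℕ) < ((α + (j0 : ℕ) : ℕ) : WithBot ℕ) := by
    exact_mod_cast (show m - 1 - (j0 : ℕ) < α + (j0 : ℕ) by have := j0.isLt; omega)
  rw [degree_add_eq_right_of_degree_lt (by rw [hd1, hd2]; exact hlt), hd2]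


open Classical in
/-- For diagonal M = diag(M_0,...,M_{m-1}) with M_{m-1} ≠ 0:
deg ℛ_j = α + j - 1 if M_{j-1} ≠ 0 and m - j if M_{j-1} = 0, and with
s = #{j : M_{j-1} ≠ 0}, the Casorati determinant Ω(x) = det(ℛ_i(x-j)) has degree
sα + (m-s)(m+1) - 2 ∑_{j : M_{j-1} = 0} j. -/
theorem diagonal_casorati_degree (α m : ℕ) (hm : 1 ≤ m) (hα : m ≤ α)
    (d : Fin m → ℝ) (hd : d ⟨m - 1, by omega⟩ ≠ 0) :
    (∀ j0 : Fin m, (calR α m (Matrix.diagonal d) j0).degree =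
      if d j0 ≠ 0 then ((α + (j0 : ℕ) : ℕ) : WithBot ℕ)
      else ((m - 1 - (j0 : ℕ) : ℕ) : WithBot ℕ)) ∧
    (let Ω : Polynomial ℝ := Matrix.det (Matrix.of fun i j : Fin m =>
        (calR α m (Matrix.diagonal d) i).comp (Polynomial.X - Polynomial.C ((j : ℝ) + 1)))
     let s : ℕ := (Finset.univ.filter (fun j0 : Fin m => d j0 ≠ 0)).card
     Ω ≠ 0 ∧ (Ω.natDegree : ℤ) = (s : ℤ) * α + ((m : ℤ) - s) * (m + 1)
        - 2 * ∑ j0 ∈ Finset.univ.filter (fun j0 : Fin m => d j0 = 0), ((j0 : ℤ) + 1)) := by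
  have hdegs : ∀ j0 : Fin m, (calR α m (Matrix.diagonal d) j0).degree =
      if d j0 ≠ 0 then ((α + (j0 : ℕ) : ℕ) : WithBot ℕ)
      else ((m - 1 - (j0 : ℕ) : ℕ) : WithBot ℕ) := by
    intro j0
    by_cases h : d j0 = 0
    · rw [if_neg (by simpa using h), calR_degree_zero α m d j0 h]
    · rw [if_pos h, calR_degree_ne_zero α m hα d j0 h]
  have hmain := main_det (fun j : Fin m => ((j : ℝ) + 1))
      (fun a b hab => by
        have : ((a : ℕ) : ℝ) = ((b : ℕ) : ℝ) := by simpa using hab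
        exact Fin.val_injective (Nat.cast_injective this))
      (fun i => calR α m (Matrix.diagonal d) i)
      (fun i => if d i ≠ 0 then α + (i : ℕ) else m - 1 - (i : ℕ))
      (fun a b hab => Fin.val_injective (by
        have h1 := a.isLt
        have h2 := b.isLt
        by_cases ha : d a = 0 <;> by_cases hb : d b = 0 <;> simp [ha, hb] at hab <;>
          first | omega | simp [hab]))
      (fun i => by rw [hdegs i]; by_cases h : d i = 0 <;> simp [h])
  refine ⟨hdegs, hmain.1, ?_⟩
  have hnat : (Matrix.det (Matrix.of fun i j : Fin m =>
        (calR α m (Matrix.diagonal d) i).comp (X - C ((j : ℝ) + 1)))).natDegree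
        + (∑ i : Fin m, (i : ℕ))
      = ∑ i : Fin m, (if d i ≠ 0 then α + (i : ℕ) else m - 1 - (i : ℕ)) := hmain.2
  -- cast the natural-number degree identity to ℤ
  have hc : ((Matrix.det (Matrix.of fun i j : Fin m =>
        (calR α m (Matrix.diagonal d) i).comp (X - C ((j : ℝ) + 1)))).natDegree : ℤ)
        + (∑ i : Fin m, ((i : ℕ) : ℤ))
      = ∑ i : Fin m, ((if d i ≠ 0 then α + (i : ℕ) else m - 1 - (i : ℕ) : ℕ) : ℤ) := by
    rw [← Nat.cast_sum, ← Nat.cast_sum, ← Nat.cast_add]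
    exact_mod_cast congrArg (Nat.cast : ℕ → ℤ) hnat
  have hD1 : ∀ i : Fin m, ((if d i ≠ 0 then α + (i : ℕ) else m - 1 - (i : ℕ) : ℕ) : ℤ)
      = if d i ≠ 0 then (α : ℤ) + ((i : ℕ) : ℤ) else (m : ℤ) - 1 - ((i : ℕ) : ℤ) := by
    intro i
    have := i.isLt
    by_cases h : d i = 0 <;> simp [h] <;> omega
  have hF0 : Finset.univ.filter (fun i : Fin m => ¬ (d i ≠ 0))
      = Finset.univ.filter (fun i : Fin m => d i = 0) := by
    ext i
    simp [not_not]
  have hsplit : ∑ i : Fin m, ((if d i ≠ 0 then α + (i : ℕ) else m - 1 - (i : ℕ) : ℕ) : ℤ)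
      = ∑ i ∈ Finset.univ.filter (fun i : Fin m => d i ≠ 0), ((α : ℤ) + ((i : ℕ) : ℤ))
        + ∑ i ∈ Finset.univ.filter (fun i : Fin m => d i = 0),
            ((m : ℤ) - 1 - ((i : ℕ) : ℤ)) := by
    rw [Finset.sum_congr rfl fun i _ => hD1 i, Finset.sum_ite, hF0]
  have hA : ∑ i ∈ Finset.univ.filter (fun i : Fin m => d i ≠ 0), ((α : ℤ) + ((i : ℕ) : ℤ))
      = ((Finset.univ.filter (fun i : Fin m => d i ≠ 0)).card : ℤ) * α
        + ∑ i ∈ Finset.univ.filter (fun i : Fin m => d i ≠ 0), ((i : ℕ) : ℤ) := by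
    rw [Finset.sum_add_distrib, Finset.sum_const, nsmul_eq_mul]
  have hB : ∑ i ∈ Finset.univ.filter (fun i : Fin m => d i = 0), ((m : ℤ) - 1 - ((i : ℕ) : ℤ))
      = ((Finset.univ.filter (fun i : Fin m => d i = 0)).card : ℤ) * ((m : ℤ) - 1)
        - ∑ i ∈ Finset.univ.filter (fun i : Fin m => d i = 0), ((i : ℕ) : ℤ) := by
    rw [Finset.sum_sub_distrib, Finset.sum_const, nsmul_eq_mul]
  have hT : ∑ i ∈ Finset.univ.filter (fun i : Fin m => d i ≠ 0), ((i : ℕ) : ℤ)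
      + ∑ i ∈ Finset.univ.filter (fun i : Fin m => d i = 0), ((i : ℕ) : ℤ)
      = ∑ i : Fin m, ((i : ℕ) : ℤ) := by
    have h := Finset.sum_filter_add_sum_filter_not Finset.univ
      (fun i : Fin m => d i ≠ 0) (fun i : Fin m => ((i : ℕ) : ℤ))
    rwa [hF0] at h
  have hcard : ((Finset.univ.filter (fun i : Fin m => d i ≠ 0)).card : ℤ)
      + ((Finset.univ.filter (fun i : Fin m => d i = 0)).card : ℤ) = m := by
    have h := Finset.card_filter_add_card_filter_not (s := Finset.univ)
      (p := fun i : Fin m => d i ≠ 0)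
    rw [hF0] at h
    rw [Finset.card_univ, Fintype.card_fin] at h
    exact_mod_cast h
  have hlast : ∑ j0 ∈ Finset.univ.filter (fun j0 : Fin m => d j0 = 0), ((j0 : ℤ) + 1)
      = ∑ i ∈ Finset.univ.filter (fun i : Fin m => d i = 0), ((i : ℕ) : ℤ)
        + ((Finset.univ.filter (fun i : Fin m => d i = 0)).card : ℤ) := by
    rw [Finset.sum_add_distrib, Finset.sum_const, nsmul_eq_mul, mul_one]
  rw [hsplit, hA, hB] at hc
  rw [hlast]
  linear_combination hc + hT + ((m : ℤ) + 1) * hcard
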